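/- arXiv:2211.03867 — 2 statements merged into one kernel-verified Lean document; each statement's English description precedes it below -/
import Mathlib

section
/- The map φₜ(v,z) = (e^{tA}v, ⟨e^{t·trA} Λₜ^{(A−trA·I₂)}(η), v⟩ + z e^{t·trA}) is, for each t ∈ ℝ, an automorphism of the Heisenberg group H, and t ↦ φₜ is a one-parameter group: φₜ ∘ φ_s = φ_{t+s}. -/
open Matrix

/-- The Heisenberg group as ℝ² × ℝ (with ℝ² = Fin 2 → ℝ). -/
abbrev H2 : Type := (Fin 2 → ℝ) × ℝ

/-- Counterclockwise rotation by π/2. -/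
noncomputable def theta (v : Fin 2 → ℝ) : Fin 2 → ℝ := ![-(v 1), v 0]

/-- The Heisenberg product. -/
noncomputable def hmul (g h : H2) : H2 :=
  (g.1 + h.1, g.2 + h.2 + (1 / 2) * (g.1 ⬝ᵥ theta h.1))

/-- The operator Λₜ^B(η) = ∫₀ᵗ e^{sBᵀ} η ds, componentwise. -/
noncomputable def Lam (B : Matrix (Fin 2) (Fin 2) ℝ) (η : Fin 2 → ℝ) (t : ℝ) :
    Fin 2 → ℝ :=
  fun i => ∫ s in (0 : ℝ)..t, (NormedSpace.exp (s • Bᵀ) *ᵥ η) i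

/-- The flow φₜ(v,z) = (e^{tA}v, ⟨e^{t·trA}Λₜ^{(A−trA·I₂)}η, v⟩ + z·e^{t·trA}). -/
noncomputable def flow (A : Matrix (Fin 2) (Fin 2) ℝ) (η : Fin 2 → ℝ) (t : ℝ)
    (g : H2) : H2 :=
  (NormedSpace.exp (t • A) *ᵥ g.1,
    (Real.exp (t * A.trace) • Lam (A - A.trace • 1) η t) ⬝ᵥ g.1 +
      g.2 * Real.exp (t * A.trace))

/- ### Auxiliary lemmas -/

open NormedSpace

local notation "M2" => Matrix (Fin 2) (Fin 2) ℝ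

section norm
attribute [local instance] Matrix.linftyOpNormedAddCommGroup Matrix.linftyOpNormedRing
  Matrix.linftyOpNormedAlgebra

/-- The linear map `M ↦ (M *ᵥ u) i`. -/
noncomputable def mvLM (u : Fin 2 → ℝ) (i : Fin 2) : M2 →ₗ[ℝ] ℝ where
  toFun M := (M *ᵥ u) i
  map_add' := by intro M N; simp [Matrix.add_mulVec]
  map_smul' := by intro c M; simp [Matrix.smul_mulVec]

lemma hasDerivAt_expEntry (A : M2) (u : Fin 2 → ℝ) (i : Fin 2) (t : ℝ) :
    HasDerivAt (fun t : ℝ => (exp (t • A) *ᵥ u) i)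
      (((A * exp (t • A)) *ᵥ u) i) t := by
  have h := hasDerivAt_exp_smul_const' (𝕂 := ℝ) A t
  exact ((mvLM u i).toContinuousLinearMap.hasFDerivAt).comp_hasDerivAt t h

lemma exp_smul_one_eq (r : ℝ) : exp (r • (1 : M2)) = Real.exp r • (1 : M2) := by
  rw [← Algebra.algebraMap_eq_smul_one]
  erw [← algebraMap_exp_comm (𝕂 := ℝ) r]
  rw [← Real.exp_eq_exp_ℝ, Algebra.algebraMap_eq_smul_one]

lemma exp_sub_trace (A : M2) (s : ℝ) :
    exp (s • (A - A.trace • 1)ᵀ) = Real.exp (-(s * A.trace)) • exp (s • Aᵀ) := by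
  have h1 : s • (A - A.trace • 1)ᵀ = s • Aᵀ + (-(s * A.trace)) • (1 : M2) := by
    rw [Matrix.transpose_sub, Matrix.transpose_smul, Matrix.transpose_one]
    rw [smul_sub, smul_smul, neg_smul, ← smul_smul]
    abel
  rw [h1, Matrix.exp_add_of_commute _ _ ((Commute.one_right (s • Aᵀ)).smul_right _),
    exp_smul_one_eq, Algebra.mul_smul_comm, mul_one]

lemma exp_add_smul (A : M2) (t s : ℝ) :
    exp ((t + s) • A) = exp (t • A) * exp (s • A) := by
  rw [add_smul]
  exact exp_add_of_commute (((Commute.refl A).smul_left t).smul_right s)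

end norm

lemma cont_expEntry (A : M2) (u : Fin 2 → ℝ) (i : Fin 2) :
    Continuous (fun t : ℝ => (exp (t • A) *ᵥ u) i) := by
  rw [continuous_iff_continuousAt]
  exact fun t => (hasDerivAt_expEntry A u i t).continuousAt

lemma intInt (A : M2) (u : Fin 2 → ℝ) (i : Fin 2) (a b : ℝ) :
    IntervalIntegrable (fun s : ℝ => (exp (s • A) *ᵥ u) i) MeasureTheory.volume a b :=
  (cont_expEntry A u i).intervalIntegrable a b

lemma dot_theta (u w : Fin 2 → ℝ) : u ⬝ᵥ theta w = u 1 * w 0 - u 0 * w 1 := by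
  simp [dotProduct, theta, Fin.sum_univ_two]; ring

lemma key1 (M : M2) (u w : Fin 2 → ℝ) :
    (M *ᵥ u) ⬝ᵥ theta w + u ⬝ᵥ theta (M *ᵥ w) = M.trace * (u ⬝ᵥ theta w) := by
  rw [dot_theta, dot_theta, dot_theta]
  simp only [Matrix.mulVec, dotProduct, Matrix.trace, Matrix.diag, Fin.sum_univ_two]
  ring

/-- The key "determinant" identity for the symplectic form. -/
lemma exp_dot (A : M2) (u w : Fin 2 → ℝ) (t : ℝ) :
    (exp (t • A) *ᵥ u) ⬝ᵥ theta (exp (t • A) *ᵥ w)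
      = Real.exp (t * A.trace) * (u ⬝ᵥ theta w) := by
  set c := A.trace with hc
  have hF : ∀ t : ℝ, HasDerivAt
      (fun t : ℝ => (exp (t • A) *ᵥ u) 1 * (exp (t • A) *ᵥ w) 0
        - (exp (t • A) *ᵥ u) 0 * (exp (t • A) *ᵥ w) 1)
      (c * ((exp (t • A) *ᵥ u) 1 * (exp (t • A) *ᵥ w) 0
        - (exp (t • A) *ᵥ u) 0 * (exp (t • A) *ᵥ w) 1)) t := by
    intro t
    have h0u := hasDerivAt_expEntry A u 0 t
    have h1u := hasDerivAt_expEntry A u 1 t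
    have h0w := hasDerivAt_expEntry A w 0 t
    have h1w := hasDerivAt_expEntry A w 1 t
    have hder := (h1u.mul h0w).sub (h0u.mul h1w)
    refine hder.congr_deriv ?_
    have hk := key1 A (exp (t • A) *ᵥ u) (exp (t • A) *ᵥ w)
    rw [dot_theta, dot_theta, dot_theta, Matrix.mulVec_mulVec, Matrix.mulVec_mulVec] at hk
    rw [hc]
    linarith
  have hG : ∀ t : ℝ, HasDerivAt (fun t : ℝ => Real.exp (-(t * c)) *
      ((exp (t • A) *ᵥ u) 1 * (exp (t • A) *ᵥ w) 0
        - (exp (t • A) *ᵥ u) 0 * (exp (t • A) *ᵥ w) 1)) 0 t := by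
    intro t
    have h2 : HasDerivAt (fun t : ℝ => -(t * c)) (-c) t := by
      exact (hasDerivAt_mul_const c).neg
    have he : HasDerivAt (fun t : ℝ => Real.exp (-(t * c))) (Real.exp (-(t * c)) * -c) t :=
      h2.exp
    have := he.mul (hF t)
    refine this.congr_deriv ?_
    ring
  have hconst := is_const_of_deriv_eq_zero (f := fun t : ℝ => Real.exp (-(t * c)) *
      ((exp (t • A) *ᵥ u) 1 * (exp (t • A) *ᵥ w) 0
        - (exp (t • A) *ᵥ u) 0 * (exp (t • A) *ᵥ w) 1))
    (fun x => (hG x).differentiableAt) (fun x => (hG x).deriv) t 0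
  simp only [zero_mul, neg_zero, Real.exp_zero, one_mul, zero_smul, exp_zero,
    Matrix.one_mulVec] at hconst
  rw [dot_theta, dot_theta]
  have hmain : (exp (t • A) *ᵥ u) 1 * (exp (t • A) *ᵥ w) 0
      - (exp (t • A) *ᵥ u) 0 * (exp (t • A) *ᵥ w) 1
      = Real.exp (t * c) * (u 1 * w 0 - u 0 * w 1) := by
    rw [← hconst, ← mul_assoc, ← Real.exp_add]
    simp
  rw [hmain]

lemma Lam_zero (B : M2) (η : Fin 2 → ℝ) : Lam B η 0 = 0 := by
  funext i; simp [Lam]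

lemma Lam_add (B : M2) (η : Fin 2 → ℝ) (t s : ℝ) :
    Lam B η (t + s) = Lam B η s + exp (s • Bᵀ) *ᵥ Lam B η t := by
  funext i
  have h1 : (∫ u in (0:ℝ)..(t + s), (exp (u • Bᵀ) *ᵥ η) i)
      = (∫ u in (0:ℝ)..s, (exp (u • Bᵀ) *ᵥ η) i)
        + ∫ u in s..(t + s), (exp (u • Bᵀ) *ᵥ η) i := by
    rw [intervalIntegral.integral_add_adjacent_intervals (intInt Bᵀ η i 0 s)
      (intInt Bᵀ η i s (t + s))]
  have h2 : (∫ u in s..(t + s), (exp (u • Bᵀ) *ᵥ η) i)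
      = ∫ u in (0:ℝ)..t, (exp ((u + s) • Bᵀ) *ᵥ η) i := by
    rw [intervalIntegral.integral_comp_add_right (fun u => (exp (u • Bᵀ) *ᵥ η) i), zero_add]
  have h3 : ∀ u : ℝ, (exp ((u + s) • Bᵀ) *ᵥ η) i
      = ∑ j, exp (s • Bᵀ) i j * (exp (u • Bᵀ) *ᵥ η) j := by
    intro u
    rw [add_comm u s, exp_add_smul, ← Matrix.mulVec_mulVec]
    simp [Matrix.mulVec, dotProduct]
  have h4 : (∫ u in (0:ℝ)..t, (exp ((u + s) • Bᵀ) *ᵥ η) i)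
      = ∑ j, exp (s • Bᵀ) i j * Lam B η t j := by
    simp_rw [h3]
    rw [intervalIntegral.integral_finset_sum]
    · refine Finset.sum_congr rfl fun j _ => ?_
      rw [intervalIntegral.integral_const_mul]; rfl
    · exact fun j _ => (intInt Bᵀ η j 0 t).const_mul _
  show (∫ u in (0:ℝ)..(t + s), (exp (u • Bᵀ) *ᵥ η) i) = _
  rw [h1, h2, h4]
  simp [Matrix.mulVec, dotProduct, Lam]
  fin_cases i <;> simp

lemma flow_zero (A : M2) (η : Fin 2 → ℝ) : flow A η 0 = id := by
  funext g
  simp [flow, Lam_zero, exp_zero, Matrix.one_mulVec]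

/-- The main vector identity for the one-parameter group law. -/
lemma alpha_add (A : M2) (η : Fin 2 → ℝ) (t s : ℝ) :
    Real.exp ((t + s) * A.trace) • Lam (A - A.trace • 1) η (t + s)
      = exp (s • Aᵀ) *ᵥ (Real.exp (t * A.trace) • Lam (A - A.trace • 1) η t)
        + (Real.exp (s * A.trace) * Real.exp (t * A.trace)) • Lam (A - A.trace • 1) η s := by
  set c := A.trace
  set B := A - c • (1 : M2)
  rw [Lam_add, smul_add]
  rw [add_comm]
  congr 1
  · rw [exp_sub_trace, Matrix.smul_mulVec, Matrix.mulVec_smul, smul_smul]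
    congr 1
    rw [← Real.exp_add]
    congr 1
    ring
  · congr 1
    rw [← Real.exp_add]
    congr 1
    ring

lemma flow_comp (A : M2) (η : Fin 2 → ℝ) (t s : ℝ) :
    flow A η t ∘ flow A η s = flow A η (t + s) := by
  funext g
  obtain ⟨v, z⟩ := g
  apply Prod.ext
  · show exp (t • A) *ᵥ (exp (s • A) *ᵥ v) = exp ((t + s) • A) *ᵥ v
    rw [Matrix.mulVec_mulVec, ← exp_add_smul]
  · show (Real.exp (t * A.trace) • Lam (A - A.trace • 1) η t) ⬝ᵥ (exp (s • A) *ᵥ v)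
        + ((Real.exp (s * A.trace) • Lam (A - A.trace • 1) η s) ⬝ᵥ v
            + z * Real.exp (s * A.trace)) * Real.exp (t * A.trace)
      = (Real.exp ((t + s) * A.trace) • Lam (A - A.trace • 1) η (t + s)) ⬝ᵥ v
          + z * Real.exp ((t + s) * A.trace)
    have hflip : (Real.exp (t * A.trace) • Lam (A - A.trace • 1) η t) ⬝ᵥ (exp (s • A) *ᵥ v)
        = (exp (s • Aᵀ) *ᵥ (Real.exp (t * A.trace) • Lam (A - A.trace • 1) η t)) ⬝ᵥ v := by
      rw [Matrix.dotProduct_mulVec]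
      congr 1
      rw [← Matrix.transpose_smul, Matrix.exp_transpose, Matrix.mulVec_transpose]
    rw [alpha_add, hflip]
    simp only [add_dotProduct, smul_dotProduct, smul_eq_mul]
    rw [show (t + s) * A.trace = s * A.trace + t * A.trace from by ring, Real.exp_add]
    ring

/-- Each φₜ is an automorphism of the Heisenberg group and t ↦ φₜ is a
one-parameter group: φₜ ∘ φₛ = φ_{t+s}. -/
theorem flow_is_one_parameter_group_of_automorphisms
    (A : Matrix (Fin 2) (Fin 2) ℝ) (η : Fin 2 → ℝ) :
    (∀ t : ℝ, Function.Bijective (flow A η t) ∧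
      ∀ g h : H2, flow A η t (hmul g h) = hmul (flow A η t g) (flow A η t h)) ∧
    (∀ t s : ℝ, flow A η t ∘ flow A η s = flow A η (t + s)) := by
  refine ⟨fun t => ⟨?_, ?_⟩, flow_comp A η⟩
  · rw [Function.bijective_iff_has_inverse]
    refine ⟨flow A η (-t), fun g => ?_, fun g => ?_⟩
    · have h := congrFun (flow_comp A η (-t) t) g
      rw [neg_add_cancel, flow_zero] at h
      exact h
    · have h := congrFun (flow_comp A η t (-t)) g
      rw [add_neg_cancel, flow_zero] at h
      exact h
  · intro g h
    obtain ⟨u, zg⟩ := g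
    obtain ⟨w, zh⟩ := h
    apply Prod.ext
    · show exp (t • A) *ᵥ (u + w) = exp (t • A) *ᵥ u + exp (t • A) *ᵥ w
      exact Matrix.mulVec_add _ _ _
    · show (Real.exp (t * A.trace) • Lam (A - A.trace • 1) η t) ⬝ᵥ (u + w)
          + (zg + zh + 1 / 2 * (u ⬝ᵥ theta w)) * Real.exp (t * A.trace)
        = ((Real.exp (t * A.trace) • Lam (A - A.trace • 1) η t) ⬝ᵥ u
              + zg * Real.exp (t * A.trace))
          + ((Real.exp (t * A.trace) • Lam (A - A.trace • 1) η t) ⬝ᵥ w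
              + zh * Real.exp (t * A.trace))
          + 1 / 2 * ((exp (t • A) *ᵥ u) ⬝ᵥ theta (exp (t • A) *ᵥ w))
      rw [exp_dot, dotProduct_add]
      ring
end

section
/- The subgroup ℤ² × (1/p)ℤ (p ∈ ℕ, p ≥ 1) of the Heisenberg group is invariant under the flow φₜ(v,z) = (e^{tA}v, ⟨e^{t·trA}Λₜ^{(A−trA·I₂)}(η), v⟩ + z e^{t·trA}) for all t ∈ ℝ if and only if A = 0 and η = 0. -/
open Matrix

/-- A continuous integer-valued function on ℝ is constant. -/
lemma cast_half_ne {k n : ℤ} (h : (k : ℝ) = (n : ℝ) + 1/2) : False := by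
  have h2 : ((2*k : ℤ) : ℝ) = ((2*n+1 : ℤ) : ℝ) := by push_cast; linarith
  have := Int.cast_injective h2
  omega

/-- A continuous integer-valued function on ℝ is constant. -/
lemma intval_const {f : ℝ → ℝ} (hf : Continuous f)
    (h : ∀ t, ∃ m : ℤ, f t = m) (t : ℝ) : f t = f 0 := by
  by_contra hne
  obtain ⟨m, hm⟩ := h t
  obtain ⟨n, hn⟩ := h 0
  have hmn : m ≠ n := fun he => hne (by rw [hm, hn, he])
  rcases le_total (f 0) (f t) with hle | hle
  · have hnm : (n : ℝ) ≤ m := by rw [← hn, ← hm]; exact hle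
    have hnm' : n + 1 ≤ m := by
      have : n ≤ m := by exact_mod_cast hnm
      omega
    have hcast : (n : ℝ) + 1 ≤ (m : ℝ) := by exact_mod_cast hnm'
    have hmem : (n : ℝ) + 1/2 ∈ Set.uIcc (f 0) (f t) := by
      rw [Set.mem_uIcc]
      left
      rw [hn, hm]
      constructor <;> linarith
    obtain ⟨s, _, hs⟩ := intermediate_value_uIcc (f := f) (a := (0:ℝ)) (b := t)
      hf.continuousOn hmem
    obtain ⟨k, hk⟩ := h s
    exact cast_half_ne (hk.symm.trans hs)
  · have hnm : (m : ℝ) ≤ n := by rw [← hn, ← hm]; exact hle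
    have hnm' : m + 1 ≤ n := by
      have : m ≤ n := by exact_mod_cast hnm
      omega
    have hcast : (m : ℝ) + 1 ≤ (n : ℝ) := by exact_mod_cast hnm'
    have hmem : (m : ℝ) + 1/2 ∈ Set.uIcc (f 0) (f t) := by
      rw [Set.mem_uIcc]
      right
      rw [hn, hm]
      constructor <;> linarith
    obtain ⟨s, _, hs⟩ := intermediate_value_uIcc (f := f) (a := (0:ℝ)) (b := t)
      hf.continuousOn hmem
    obtain ⟨k, hk⟩ := h s
    exact cast_half_ne (hk.symm.trans hs)

/-- Invariance of the lattice subgroup ℤ² × (1/p)ℤ under the flow forces the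
linear vector field to vanish: A = 0 and η = 0. -/
theorem lattice_invariant_iff_trivial (A : Matrix (Fin 2) (Fin 2) ℝ)
    (η : Fin 2 → ℝ) (p : ℕ) (hp : 1 ≤ p)
    (L : Set H2)
    (hL : L = {g : H2 | (∃ m : ℤ, g.1 0 = m) ∧ (∃ m : ℤ, g.1 1 = m) ∧
      ∃ k : ℤ, g.2 = (k : ℝ) / p}) :
    (∀ t : ℝ, flow A η t '' L = L) ↔ (A = 0 ∧ η = 0) := by
  letI : SeminormedRing (Matrix (Fin 2) (Fin 2) ℝ) := Matrix.linftyOpSemiNormedRing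
  letI : NormedRing (Matrix (Fin 2) (Fin 2) ℝ) := Matrix.linftyOpNormedRing
  letI : NormedAlgebra ℝ (Matrix (Fin 2) (Fin 2) ℝ) := Matrix.linftyOpNormedAlgebra
  have hp0 : (p : ℝ) ≠ 0 := by positivity
  constructor
  · intro h
    have hmem : ∀ t : ℝ, ∀ g ∈ L, flow A η t g ∈ L := by
      intro t g hg
      rw [← h t]
      exact Set.mem_image_of_mem _ hg
    -- the standard basis vectors (with z = 0) lie in L
    have heL : ∀ j : Fin 2, ((Pi.single j (1:ℝ), (0:ℝ)) : H2) ∈ L := by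
      intro j
      rw [hL]
      refine ⟨?_, ?_, ⟨0, by simp⟩⟩
      · rcases eq_or_ne j 0 with rfl | hj
        · exact ⟨1, by simp⟩
        · exact ⟨0, by simp [Pi.single_eq_of_ne (Ne.symm hj)]⟩
      · rcases eq_or_ne j 1 with rfl | hj
        · exact ⟨1, by simp⟩
        · exact ⟨0, by simp [Pi.single_eq_of_ne (Ne.symm hj)]⟩
    -- the entries of exp (t • A) are integers for all t
    have hint : ∀ (i j : Fin 2) (t : ℝ),
        ∃ m : ℤ, (NormedSpace.exp (t • A)) i j = m := by
      intro i j t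
      have := hmem t _ (heL j)
      rw [hL] at this
      obtain ⟨h0, h1, _⟩ := this
      have hfirst : (flow A η t (Pi.single j 1, 0)).1
          = fun i => (NormedSpace.exp (t • A)) i j := by
        show NormedSpace.exp (t • A) *ᵥ Pi.single j 1 = _
        rw [Matrix.mulVec_single]
        funext i
        simp
      rw [hfirst] at h0 h1
      fin_cases i
      · obtain ⟨m, hm⟩ := h0
        exact ⟨m, by simpa using hm⟩
      · obtain ⟨m, hm⟩ := h1
        exact ⟨m, by simpa using hm⟩
    -- hence exp (t • A) = 1 for all t
    have hone : ∀ t : ℝ, NormedSpace.exp (t • A) = 1 := by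
      intro t
      ext i j
      have hc : Continuous fun s : ℝ => (NormedSpace.exp (s • A)) i j := by
        have h1 : Continuous fun s : ℝ => s • A :=
          (continuous_id.smul continuous_const)
        have h2 : Continuous fun s : ℝ => NormedSpace.exp (s • A) :=
          continuous_iff_continuousAt.2 fun s => (hasDerivAt_exp_smul_const (𝕂 := ℝ) A s).continuousAt
        exact ((continuous_apply j).comp ((continuous_apply i).comp h2))
      have := intval_const hc (hint i j) t
      rw [this]
      simp [NormedSpace.exp_zero]
    -- which forces A = 0
    have hA : A = 0 := by
      have hd := hasDerivAt_exp_smul_const (𝕂 := ℝ) A (0 : ℝ)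
      have hfun : (fun u : ℝ => NormedSpace.exp (u • A)) = fun _ : ℝ => 1 :=
        funext hone
      have h0 := hd.unique ((hasDerivAt_const (0 : ℝ) (1 : Matrix (Fin 2) (Fin 2) ℝ)).congr_of_eventuallyEq (Filter.Eventually.of_forall hone))
      rw [zero_smul, NormedSpace.exp_zero, one_mul] at h0
      exact h0
    refine ⟨hA, ?_⟩
    subst hA
    -- now the flow is (v, t⟨η,v⟩ + z)
    have hflow : ∀ (t : ℝ) (j : Fin 2),
        (flow 0 η t (Pi.single j 1, 0)).2 = t * η j := by
      intro t j
      have hLam : Lam ((0 : Matrix (Fin 2) (Fin 2) ℝ)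
          - Matrix.trace (0 : Matrix (Fin 2) (Fin 2) ℝ) • 1) η t
          = fun i => t * η i := by
        funext i
        simp only [Lam, Matrix.trace_zero, zero_smul, sub_zero, Matrix.transpose_zero,
          smul_zero, NormedSpace.exp_zero, Matrix.one_mulVec]
        rw [intervalIntegral.integral_const]
        simp
      show (Real.exp (t * Matrix.trace (0 : Matrix (Fin 2) (Fin 2) ℝ)) •
          Lam _ η t) ⬝ᵥ Pi.single j 1 + 0 * _ = t * η j
      rw [hLam]
      simp [dotProduct_single]
    have hη : ∀ j : Fin 2, η j = 0 := by
      intro j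
      have hint' : ∀ t : ℝ, ∃ k : ℤ, (p : ℝ) * (t * η j) = k := by
        intro t
        have := hmem t _ (heL j)
        rw [hL] at this
        obtain ⟨_, _, k, hk⟩ := this
        rw [hflow t j] at hk
        exact ⟨k, by rw [hk]; field_simp⟩
      have hc : Continuous fun t : ℝ => (p : ℝ) * (t * η j) := by continuity
      have h1 := intval_const hc hint' 1
      simp only [mul_zero, zero_mul, one_mul] at h1
      have : (p : ℝ) * η j = 0 := h1
      exact (mul_eq_zero.mp this).resolve_left hp0
    exact funext hη
  · rintro ⟨hA, hη⟩ t
    subst hA; subst hη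
    have hid : ∀ g : H2, flow 0 0 t g = g := by
      intro g
      have hLam : ∀ B : Matrix (Fin 2) (Fin 2) ℝ, Lam B 0 t = 0 := by
        intro B
        funext i
        simp [Lam]
      show (NormedSpace.exp (t • (0 : Matrix (Fin 2) (Fin 2) ℝ)) *ᵥ g.1, _) = g
      rw [smul_zero, NormedSpace.exp_zero, Matrix.one_mulVec]
      simp only [flow, hLam, smul_zero, zero_dotProduct, zero_add,
        Matrix.trace_zero, mul_zero, Real.exp_zero, mul_one]
    have : flow 0 0 t = id := funext hid
    rw [this, Set.image_id]
end
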